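/- arXiv:1307.0083 — 2 statements merged into one kernel-verified Lean document; each statement's English description precedes it below -/
import Mathlib

section
/- Let n ≥ 3 be a positive integer, let p be a prime number, and let a be the exponent of p in the prime factorization of n (a = 0 if p does not divide n). Then G(n·p) > G(n) holds if and only if (log n)^E > log n + log p, where E = (p^(a+2) − 1)/(p^(a+2) − p) and log denotes the natural logarithm. -/
open ArithmeticFunction Real
open scoped ArithmeticFunction.sigma

/-- The Grönwall function `G(n) = σ(n) / (n · log log n)`. -/
noncomputable def G (n : ℕ) : ℝ := (σ 1 n : ℝ) / (n * Real.log (Real.log n))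

theorem gronwall_increase_iff_rpow (n : ℕ) (hn : 3 ≤ n) (p : ℕ) (hp : p.Prime)
    (E : ℝ) (hE : E = ((p : ℝ) ^ (n.factorization p + 2) - 1) /
      ((p : ℝ) ^ (n.factorization p + 2) - p)) :
    G (n * p) > G n ↔ (Real.log n) ^ E > Real.log n + Real.log p := by
  set a := n.factorization p with ha
  set m := n / p ^ a with hm
  have hn0 : 0 < n := by omega
  have hp1 : (1:ℝ) < p := by exact_mod_cast hp.one_lt
  have hp0 : (0:ℝ) < p := by linarith
  have hnm : p ^ a * m = n := Nat.ordProj_mul_ordCompl_eq_self n p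
  have hpm : ¬ p ∣ m := Nat.not_dvd_ordCompl hp hn0.ne'
  have hm0 : 0 < m := Nat.ordCompl_pos p hn0.ne'
  have hcop : Nat.Coprime (p ^ a) m :=
    Nat.Coprime.pow_left _ ((Nat.Prime.coprime_iff_not_dvd hp).mpr hpm)
  have hσn : (σ 1 n : ℝ) = (σ 1 (p ^ a) : ℝ) * (σ 1 m : ℝ) := by
    rw [← hnm]
    exact_mod_cast congrArg (Nat.cast (R := ℝ))
      (isMultiplicative_sigma.map_mul_of_coprime hcop)
  have hcop' : Nat.Coprime (p ^ (a + 1)) m :=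
    Nat.Coprime.pow_left _ ((Nat.Prime.coprime_iff_not_dvd hp).mpr hpm)
  have hσnp : (σ 1 (n * p) : ℝ) = (σ 1 (p ^ (a + 1)) : ℝ) * (σ 1 m : ℝ) := by
    have h : n * p = p ^ (a + 1) * m := by rw [← hnm]; ring
    rw [h]
    exact_mod_cast congrArg (Nat.cast (R := ℝ))
      (isMultiplicative_sigma.map_mul_of_coprime hcop')
  have hgeom : ∀ i : ℕ, (σ 1 (p ^ i) : ℝ) * ((p:ℝ) - 1) = (p:ℝ) ^ (i + 1) - 1 := by
    intro i
    rw [sigma_one_apply_prime_pow hp]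
    push_cast
    exact geom_sum_mul (p:ℝ) (i+1)
  have hA := hgeom a
  have hB := hgeom (a + 1)
  have hlog3 : (1:ℝ) < Real.log 3 := by
    rw [Real.lt_log_iff_exp_lt (by norm_num)]
    calc Real.exp 1 < 2.7182818286 := Real.exp_one_lt_d9
    _ < 3 := by norm_num
  have hLn : 1 < Real.log n := by
    calc (1:ℝ) < Real.log 3 := hlog3
    _ ≤ Real.log n := Real.log_le_log (by norm_num) (by exact_mod_cast hn)
  have hLp : 0 < Real.log p := Real.log_pos hp1
  have hLnp : Real.log (↑(n * p)) = Real.log n + Real.log p := by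
    push_cast
    exact Real.log_mul (by positivity) (by positivity)
  have hL' : 1 < Real.log n + Real.log p := by linarith
  have hX : 0 < Real.log (Real.log n) := Real.log_pos hLn
  have hX' : 0 < Real.log (Real.log n + Real.log p) := Real.log_pos hL'
  set X := Real.log (Real.log n) with hXdef
  set X' := Real.log (Real.log n + Real.log p) with hX'def
  have hS0 : (0:ℝ) < (σ 1 m : ℝ) := by
    have : 0 < σ 1 m := by
      rw [sigma_one_apply]
      exact Finset.sum_pos (fun d hd => Nat.pos_of_mem_divisors hd)
        ⟨m, Nat.mem_divisors_self m hm0.ne'⟩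
    exact_mod_cast this
  have hD : (0:ℝ) < (p:ℝ) ^ (a + 2) - p := by
    have h1 : (1:ℝ) < (p:ℝ) ^ (a + 1) := one_lt_pow₀ hp1 (by omega)
    have : (p:ℝ) ^ (a + 2) = p * p ^ (a + 1) := by ring
    nlinarith
  have hnR : (0:ℝ) < (n:ℝ) := by exact_mod_cast hn0
  -- step 1 : unfold G and clear denominators
  have step1 : G (n * p) > G n ↔
      (σ 1 n : ℝ) * (↑(n * p) * X') < (σ 1 (n * p) : ℝ) * (↑n * X) := by
    unfold G
    rw [hLnp, ← hXdef, ← hX'def, gt_iff_lt, div_lt_div_iff₀ (by positivity)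
      (by push_cast; positivity)]
  -- step 2 : cancel σ m and n
  have step2 : (σ 1 n : ℝ) * (↑(n * p) * X') < (σ 1 (n * p) : ℝ) * (↑n * X) ↔
      (σ 1 (p ^ a) : ℝ) * ((p:ℝ) * X') < (σ 1 (p ^ (a + 1)) : ℝ) * X := by
    rw [hσn, hσnp]
    push_cast
    have e1 : (σ 1 (p ^ a) : ℝ) * (σ 1 m : ℝ) * ((n:ℝ) * (p:ℝ) * X') =
        ((σ 1 (p ^ a) : ℝ) * ((p:ℝ) * X')) * ((σ 1 m : ℝ) * (n:ℝ)) := by ring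
    have e2 : (σ 1 (p ^ (a + 1)) : ℝ) * (σ 1 m : ℝ) * ((n:ℝ) * X) =
        ((σ 1 (p ^ (a + 1)) : ℝ) * X) * ((σ 1 m : ℝ) * (n:ℝ)) := by ring
    rw [e1, e2, mul_lt_mul_iff_of_pos_right (by positivity)]
  -- step 3 : multiply by (p - 1)
  have step3 : (σ 1 (p ^ a) : ℝ) * ((p:ℝ) * X') < (σ 1 (p ^ (a + 1)) : ℝ) * X ↔
      ((p:ℝ) ^ (a + 2) - p) * X' < ((p:ℝ) ^ (a + 2) - 1) * X := by
    have hpp : (0:ℝ) < (p:ℝ) - 1 := by linarith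
    have e1 : (σ 1 (p ^ a) : ℝ) * ((p:ℝ) * X') * ((p:ℝ) - 1) =
        ((p:ℝ) ^ (a + 2) - p) * X' := by
      have h : (σ 1 (p ^ a) : ℝ) * ((p:ℝ) * X') * ((p:ℝ) - 1) =
          ((σ 1 (p ^ a) : ℝ) * ((p:ℝ) - 1)) * ((p:ℝ) * X') := by ring
      rw [h, hA]; ring
    have e2 : (σ 1 (p ^ (a + 1)) : ℝ) * X * ((p:ℝ) - 1) =
        ((p:ℝ) ^ (a + 2) - 1) * X := by
      have h : (σ 1 (p ^ (a + 1)) : ℝ) * X * ((p:ℝ) - 1) =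
          ((σ 1 (p ^ (a + 1)) : ℝ) * ((p:ℝ) - 1)) * X := by ring
      rw [h, hB]
    constructor
    · intro h1
      have h2 := (mul_lt_mul_iff_of_pos_right hpp).mpr h1
      rwa [e1, e2] at h2
    · intro h1
      rw [← e1, ← e2] at h1
      exact (mul_lt_mul_iff_of_pos_right hpp).mp h1
  -- step 4 : to E
  have step4 : ((p:ℝ) ^ (a + 2) - p) * X' < ((p:ℝ) ^ (a + 2) - 1) * X ↔
      X' < E * X := by
    rw [hE, div_mul_eq_mul_div, lt_div_iff₀ hD,
      mul_comm ((p:ℝ) ^ (a + 2) - (p:ℝ)) X']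
  -- step 5 : exponentiate
  have step5 : X' < E * X ↔ (Real.log n) ^ E > Real.log n + Real.log p := by
    rw [Real.rpow_def_of_pos (by linarith : (0:ℝ) < Real.log n), gt_iff_lt,
      ← Real.exp_log (by linarith : (0:ℝ) < Real.log n + Real.log p),
      Real.exp_lt_exp, ← hX'def, mul_comm (Real.log (Real.log (n:ℝ))) E]
  rw [step1, step2, step3, step4, step5]
end

section
/- Let n ≥ 3 be a positive integer and let p be a prime number that does not divide n. If p < log n, then G(n·p) > G(n), where log denotes the natural logarithm. -/
open ArithmeticFunction Real
open scoped ArithmeticFunction.sigma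

theorem gronwall_increase_of_prime_lt_log (n : ℕ) (hn : 3 ≤ n) (p : ℕ) (hp : p.Prime)
    (hpn : ¬ p ∣ n) (h : (p : ℝ) < Real.log n) :
    G (n * p) > G n := by
  have hp2 : (2 : ℝ) ≤ p := by exact_mod_cast hp.two_le
  have hppos : (0 : ℝ) < p := by linarith
  set L := Real.log n with hLdef
  have hL2 : (2 : ℝ) < L := lt_of_le_of_lt hp2 h
  have hlogL : (0 : ℝ) < Real.log L := Real.log_pos (by linarith)
  have hnpos : (0 : ℝ) < n := by positivity
  have hlogp : Real.log p < Real.log L := Real.log_lt_log hppos h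
  have hlognp : Real.log ((n : ℕ) * p : ℕ) = L + Real.log p := by
    push_cast
    rw [Real.log_mul (ne_of_gt hnpos) (ne_of_gt hppos)]
  -- key: L + log p < L * exp (log L / p)
  have hexp : 1 + Real.log L / p < Real.exp (Real.log L / p) := by
    have := Real.add_one_lt_exp (x := Real.log L / p) (by positivity)
    linarith
  have hLp : Real.log L < L * (Real.log L / p) := by
    rw [mul_div_assoc'] at *
    rw [lt_div_iff₀ hppos]
    nlinarith
  have key : L + Real.log p < L * Real.exp (Real.log L / p) := by
    nlinarith [hexp, hlogp, hLp]
  have hlpp : (0 : ℝ) < Real.log p := Real.log_pos (by linarith)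
  have hllnp : Real.log (Real.log ((n : ℕ) * p : ℕ)) < Real.log L + Real.log L / p := by
    rw [hlognp]
    calc Real.log (L + Real.log p) < Real.log (L * Real.exp (Real.log L / p)) :=
          Real.log_lt_log (by linarith) key
      _ = Real.log L + Real.log L / p := by
          rw [Real.log_mul (by linarith) (Real.exp_ne_zero _), Real.log_exp]
  have hmain : (p : ℝ) * Real.log (Real.log ((n : ℕ) * p : ℕ)) < ((p : ℝ) + 1) * Real.log L := by
    have := mul_lt_mul_of_pos_left hllnp hppos
    have hd : (p : ℝ) * (Real.log L / p) = Real.log L := by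
      field_simp
    nlinarith
  -- positivity of log log (n*p)
  have hllnp_pos : 0 < Real.log (Real.log ((n : ℕ) * p : ℕ)) := by
    rw [hlognp]; exact Real.log_pos (by linarith)
  have hllL_pos : 0 < Real.log L := hlogL
  -- sigma values
  have hcop : Nat.Coprime n p := (Nat.coprime_comm.mp (hp.coprime_iff_not_dvd.mpr hpn))
  have hsig : (σ 1 (n * p) : ℝ) = (σ 1 n : ℝ) * ((p : ℝ) + 1) := by
    rw [ArithmeticFunction.isMultiplicative_sigma.map_mul_of_coprime hcop]
    have : σ 1 p = p + 1 := by
      rw [ArithmeticFunction.sigma_one_apply, hp.divisors,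
        Finset.sum_insert (by simp [hp.ne_one, Ne.symm hp.ne_one]), Finset.sum_singleton]
      omega
    rw [this]
    push_cast
    ring
  have hsn_pos : (0 : ℝ) < (σ 1 n : ℝ) := by
    have : 0 < σ 1 n := by
      rw [ArithmeticFunction.sigma_one_apply]
      exact Finset.sum_pos (fun d hd => Nat.pos_of_mem_divisors hd)
        (Nat.nonempty_divisors.mpr (by omega))
    exact_mod_cast this
  unfold G
  rw [gt_iff_lt, div_lt_div_iff₀ (by positivity)
    (mul_pos (by exact_mod_cast Nat.mul_pos (by omega : 0 < n) hp.pos) hllnp_pos), hsig]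
  push_cast
  push_cast at hmain hllnp_pos
  nlinarith [mul_pos hsn_pos hnpos,
    mul_lt_mul_of_pos_left hmain (mul_pos hsn_pos hnpos)]
end
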